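/- Let p ∈ (1,∞), let V be a real vector space, and let E : V → [0,∞) be p-homogeneous (E(au) = |a|^p E(u)) and satisfy p-Clarkson's inequality: for p ∈ (1,2], E(f+g) + E(f−g) ≥ 2(E(f)^{1/(p−1)} + E(g)^{1/(p−1)})^{p−1}, and for p ∈ [2,∞), E(f+g) + E(f−g) ≤ 2(E(f)^{1/(p−1)} + E(g)^{1/(p−1)})^{p−1}, and suppose E^{1/p} satisfies the triangle inequality. Then for all f, g ∈ V: E(f+g) + E(f−g) − 2E(f) ≤ 2·max(1, p−1)·(E(f)^{1/(p−1)} + E(g)^{1/(p−1)})^{(p−2)⁺}·E(g)^{min(1, 1/(p−1))}, where (p−2)⁺ = max(p−2, 0). -/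
import Mathlib

/-- Mean value estimate: `(a+b)^q - a^q ≤ q (a+b)^{q-1} b` for `q ≥ 1`, `a, b ≥ 0`. -/
lemma stmt_7_mvt {q a b : ℝ} (hq : 1 ≤ q) (ha : 0 ≤ a) (hb : 0 ≤ b) :
    (a + b) ^ q - a ^ q ≤ q * (a + b) ^ (q - 1) * b := by
  rcases eq_or_lt_of_le (by linarith : (0:ℝ) ≤ a + b) with hc | hc
  · have ha0 : a = 0 := by linarith
    have hb0 : b = 0 := by linarith
    simp [ha0, hb0, Real.zero_rpow (by linarith : q ≠ 0)]
  · set c := a + b with hcdef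
    set t := a / c with htdef
    have ht0 : 0 ≤ t := div_nonneg ha hc.le
    have ht1 : t ≤ 1 := by
      rw [htdef, div_le_one hc]; linarith
    have hB : 1 + q * (t - 1) ≤ t ^ q := by
      have := one_add_mul_self_le_rpow_one_add (by linarith : (-1:ℝ) ≤ t - 1) hq
      simpa using this
    have haq : a ^ q = t ^ q * c ^ q := by
      rw [htdef, Real.div_rpow ha hc.le, div_mul_cancel₀]
      exact (Real.rpow_pos_of_pos hc q).ne'
    have hcq : c ^ q = c ^ (q - 1) * c := by
      rw [← Real.rpow_add_one hc.ne' (q - 1)]; ring_nf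
    have hbt : b = (1 - t) * c := by
      rw [htdef]; field_simp; ring
    have hkey : (1 - t ^ q) ≤ q * (1 - t) := by linarith
    have hcq0 : 0 ≤ c ^ q := (Real.rpow_pos_of_pos hc q).le
    have := mul_le_mul_of_nonneg_right hkey hcq0
    calc c ^ q - a ^ q = (1 - t ^ q) * c ^ q := by rw [haq]; ring
      _ ≤ q * (1 - t) * c ^ q := by nlinarith
      _ = q * c ^ (q - 1) * b := by rw [hbt, hcq]; ring

/-- Two-point convexity: `(x+y)^r ≤ 2^{r-1} (x^r + y^r)` for `r ≥ 1`, `x, y ≥ 0`. -/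
lemma stmt_7_conv {r x y : ℝ} (hr : 1 ≤ r) (hx : 0 ≤ x) (hy : 0 ≤ y) :
    (x + y) ^ r ≤ 2 ^ (r - 1) * (x ^ r + y ^ r) := by
  have h := NNReal.rpow_add_le_mul_rpow_add_rpow x.toNNReal y.toNNReal hr
  have h' := NNReal.coe_le_coe.mpr h
  push_cast at h'
  rwa [Real.coe_toNNReal x hx, Real.coe_toNNReal y hy] at h'

/-- For a `p`-energy form `E` (i.e. `E^{1/p}` is a seminorm and `E` is `p`-homogeneous)
satisfying `p`-Clarkson's inequality, one has the central-difference bound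
`E(f+g) + E(f−g) − 2E(f) ≤ 2·max(1,p−1)·(E(f)^{1/(p−1)} + E(g)^{1/(p−1)})^{(p−2)⁺}·E(g)^{min(1,1/(p−1))}`. -/
theorem stmt_7 {V : Type*} [AddCommGroup V] [Module ℝ V]
    (p : ℝ) (hp : 1 < p) (E : V → ℝ)
    (hE0 : ∀ u, 0 ≤ E u)
    (hhom : ∀ (a : ℝ) (u : V), E (a • u) = |a| ^ p * E u)
    (htri : ∀ u v : V, E (u + v) ^ (1 / p) ≤ E u ^ (1 / p) + E v ^ (1 / p))
    (hCla₁ : p ≤ 2 → ∀ u v : V,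
      2 * (E u ^ (1 / (p - 1)) + E v ^ (1 / (p - 1))) ^ (p - 1) ≤ E (u + v) + E (u - v))
    (hCla₂ : 2 ≤ p → ∀ u v : V,
      E (u + v) + E (u - v) ≤ 2 * (E u ^ (1 / (p - 1)) + E v ^ (1 / (p - 1))) ^ (p - 1))
    (f g : V) :
    E (f + g) + E (f - g) - 2 * E f
      ≤ 2 * max 1 (p - 1)
          * (E f ^ (1 / (p - 1)) + E g ^ (1 / (p - 1))) ^ max (p - 2) 0
          * E g ^ min 1 (1 / (p - 1)) := by
  have hp1 : 0 < p - 1 := by linarith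
  by_cases hp2 : p ≤ 2
  · -- weak Clarkson case `1 < p ≤ 2`
    have hr : 1 ≤ 1 / (p - 1) := by
      rw [le_div_iff₀ hp1]; linarith
    set x := E (f + g) with hxdef
    set y := E (f - g) with hydef
    have hcl := hCla₁ hp2 (f + g) (f - g)
    have e1 : (f + g) + (f - g) = (2:ℝ) • f := by
      rw [two_smul]; abel
    have e2 : (f + g) - (f - g) = (2:ℝ) • g := by
      rw [two_smul]; abel
    rw [e1, e2, hhom, hhom] at hcl
    have habs : |(2:ℝ)| = 2 := by norm_num
    rw [habs] at hcl
    rw [← hxdef, ← hydef] at hcl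
    -- key : x + y ≤ 2 * (E f + E g)
    have hS0 : 0 ≤ x ^ (1 / (p - 1)) + y ^ (1 / (p - 1)) :=
      add_nonneg (Real.rpow_nonneg (hE0 _) _) (Real.rpow_nonneg (hE0 _) _)
    have h1 : (x + y) ^ (1 / (p - 1))
        ≤ 2 ^ (1 / (p - 1) - 1) * (x ^ (1 / (p - 1)) + y ^ (1 / (p - 1))) :=
      stmt_7_conv hr (hE0 _) (hE0 _)
    have hxy0 : 0 ≤ x + y := add_nonneg (hE0 _) (hE0 _)
    have h2 : ((x + y) ^ (1 / (p - 1))) ^ (p - 1) = x + y := by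
      rw [one_div, Real.rpow_inv_rpow hxy0 hp1.ne']
    have h3 := Real.rpow_le_rpow (Real.rpow_nonneg hxy0 _) h1 (by linarith : (0:ℝ) ≤ p - 1)
    rw [h2, Real.mul_rpow (by positivity) hS0,
      ← Real.rpow_mul (by norm_num : (0:ℝ) ≤ 2)] at h3
    have hexp : (1 / (p - 1) - 1) * (p - 1) = 2 - p := by
      field_simp; ring
    rw [hexp] at h3
    have h4 : (x ^ (1 / (p - 1)) + y ^ (1 / (p - 1))) ^ (p - 1)
        ≤ 2 ^ (p - 1) * (E f + E g) := by
      have h2p : (2:ℝ) ^ p = 2 ^ (p - 1) * 2 := by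
        rw [← Real.rpow_add_one (by norm_num : (2:ℝ) ≠ 0) (p - 1)]; ring_nf
      have e : (2:ℝ) ^ p * E f + 2 ^ p * E g = 2 * (2 ^ (p - 1) * (E f + E g)) := by
        rw [h2p]; ring
      rw [e] at hcl
      linarith
    have hkey : x + y ≤ 2 * (E f + E g) := by
      have h5 : (2:ℝ) ^ (2 - p) * ((x ^ (1 / (p - 1)) + y ^ (1 / (p - 1))) ^ (p - 1))
          ≤ 2 ^ (2 - p) * (2 ^ (p - 1) * (E f + E g)) :=
        mul_le_mul_of_nonneg_left h4 (by positivity)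
      have h6 : (2:ℝ) ^ (2 - p) * 2 ^ (p - 1) = 2 := by
        rw [← Real.rpow_add (by norm_num : (0:ℝ) < 2)]; norm_num
      calc x + y ≤ 2 ^ (2 - p) * ((x ^ (1 / (p - 1)) + y ^ (1 / (p - 1))) ^ (p - 1)) := h3
        _ ≤ 2 ^ (2 - p) * (2 ^ (p - 1) * (E f + E g)) := h5
        _ = 2 * (E f + E g) := by rw [← mul_assoc, h6]
    have hm1 : max 1 (p - 1) = 1 := max_eq_left (by linarith)
    have hm2 : max (p - 2) 0 = 0 := max_eq_right (by linarith)
    have hm3 : min 1 (1 / (p - 1)) = 1 := min_eq_left hr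
    rw [hm1, hm2, hm3, Real.rpow_zero, Real.rpow_one]
    linarith
  · -- strong Clarkson case `p ≥ 2`
    push_neg at hp2
    have hp2' : 2 ≤ p := hp2.le
    set A := E f ^ (1 / (p - 1)) with hAdef
    set B := E g ^ (1 / (p - 1)) with hBdef
    have hA0 : 0 ≤ A := Real.rpow_nonneg (hE0 f) _
    have hB0 : 0 ≤ B := Real.rpow_nonneg (hE0 g) _
    have hcl := hCla₂ hp2' f g
    have hEf : A ^ (p - 1) = E f := by
      rw [hAdef, one_div, Real.rpow_inv_rpow (hE0 f) hp1.ne']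
    have hmvt : (A + B) ^ (p - 1) - A ^ (p - 1) ≤ (p - 1) * (A + B) ^ (p - 1 - 1) * B :=
      stmt_7_mvt (by linarith) hA0 hB0
    have hm1 : max 1 (p - 1) = p - 1 := max_eq_right (by linarith)
    have hm2 : max (p - 2) 0 = p - 2 := max_eq_left (by linarith)
    have hm3 : min 1 (1 / (p - 1)) = 1 / (p - 1) := by
      apply min_eq_right
      rw [div_le_one hp1]; linarith
    rw [hm1, hm2, hm3]
    have hee : p - 1 - 1 = p - 2 := by ring
    rw [hee] at hmvt
    rw [hEf] at hmvt
    nlinarith [hmvt, hcl]
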